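/- Let I and J be nonempty finite types and let ρ : Matrix (I × J) (I × J) ℂ be positive semidefinite with trace 1, and block diagonal in the first factor: ρ ((k,σ),(l,τ)) = 0 whenever k ≠ l. Then ρ is separable: there exist a finite family of reals λ_t ≥ 0 with ∑_t λ_t = 1 and positive semidefinite trace-1 matrices A_t : Matrix I I ℂ and B_t : Matrix J J ℂ such that ρ = ∑_t λ_t (A_t ⊗ₖ B_t), where ⊗ₖ is the Kronecker product indexed by I × J. -/

import Mathlib

open scoped BigOperators ComplexOrder Kronecker
open Matrix

lemma psd_diag_nonneg {n : Type*} [Fintype n] [DecidableEq n] {M : Matrix n n ℂ}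
    (h : M.PosSemidef) (i : n) : 0 ≤ M i i := by
  have h2 := h.dotProduct_mulVec_nonneg (Pi.single i 1)
  simpa [dotProduct, Matrix.mulVec, Pi.single_apply, apply_ite,
    Finset.sum_ite_eq'] using h2

lemma psd_trace_nonneg {n : Type*} [Fintype n] [DecidableEq n] {M : Matrix n n ℂ}
    (h : M.PosSemidef) : 0 ≤ M.trace :=
  Finset.sum_nonneg fun i _ => psd_diag_nonneg h i

lemma psd_trace_real {n : Type*} [Fintype n] [DecidableEq n] {M : Matrix n n ℂ}
    (h : M.PosSemidef) : (M.trace.re : ℂ) = M.trace := by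
  have h0 := psd_trace_nonneg h
  rw [Complex.le_def] at h0
  exact Complex.ext rfl (by simp [h0.2.symm])

lemma psd_trace_eq_zero {n : Type*} [Fintype n] [DecidableEq n] {M : Matrix n n ℂ}
    (h : M.PosSemidef) (htr : M.trace = 0) : M = 0 := by
  exact (h.trace_eq_zero_iff).mp htr

lemma psd_real_smul {n : Type*} [Fintype n] {M : Matrix n n ℂ}
    (h : M.PosSemidef) {c : ℝ} (hc : 0 ≤ c) : ((c : ℂ) • M).PosSemidef := by
  refine Matrix.PosSemidef.of_dotProduct_mulVec_nonneg ?_ ?_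
  · rw [Matrix.IsHermitian, Matrix.conjTranspose_smul, h.1]
    simp
  · intro x
    rw [Matrix.smul_mulVec, dotProduct_smul]
    exact smul_nonneg (by exact_mod_cast hc) (h.dotProduct_mulVec_nonneg x)

lemma psd_stdBasisMatrix {n : Type*} [Fintype n] [DecidableEq n] (k : n) :
    (Matrix.single k k (1 : ℂ)).PosSemidef := by
  refine Matrix.PosSemidef.of_dotProduct_mulVec_nonneg ?_ ?_
  · ext i j
    simp only [Matrix.conjTranspose_apply, Matrix.single]
    by_cases h1 : k = i <;> by_cases h2 : k = j <;>
      simp [Matrix.of_apply, h1, h2, and_comm]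
  · intro x
    have : Matrix.single k k (1 : ℂ) *ᵥ x = Pi.single k (x k) := by
      ext i
      simp only [Matrix.mulVec, dotProduct, Matrix.single, Matrix.of_apply,
        ite_mul, one_mul, zero_mul, Pi.single_apply]
      by_cases h : k = i
      · subst h
        simp [Finset.sum_ite_eq]
      · have h2 : ¬ i = k := fun hh => h hh.symm
        simp [h, h2]
    rw [this]
    simp only [dotProduct, Pi.single_apply]
    rw [Finset.sum_eq_single k (by intro b _ hb; simp [hb]) (by simp)]
    simpa using star_mul_self_nonneg (x k)

/-- separability direction in the paper's Proposition 2: a positive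
semidefinite trace-one matrix on `I × J` that is block diagonal in the first factor
is separable, i.e. a finite convex combination of Kronecker products of positive
semidefinite trace-one matrices. -/
theorem block_diagonal_state_is_separable
    {I J : Type*} [Fintype I] [Nonempty I] [Fintype J] [Nonempty J]
    (ρ : Matrix (I × J) (I × J) ℂ) (hpsd : ρ.PosSemidef) (htr : ρ.trace = 1)
    (hblock : ∀ (k l : I) (σ τ : J), k ≠ l → ρ (k, σ) (l, τ) = 0) :
    ∃ (n : ℕ) (lam : Fin n → ℝ)
      (A : Fin n → Matrix I I ℂ) (B : Fin n → Matrix J J ℂ),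
      (∀ t, 0 ≤ lam t) ∧ (∑ t, lam t = 1) ∧
      (∀ t, (A t).PosSemidef ∧ (A t).trace = 1) ∧
      (∀ t, (B t).PosSemidef ∧ (B t).trace = 1) ∧
      ρ = ∑ t, (lam t : ℂ) • (A t ⊗ₖ B t) := by
  classical
  set e : Fin (Fintype.card I) ≃ I := (Fintype.equivFin I).symm with he
  -- diagonal blocks
  set M : I → Matrix J J ℂ := fun k => ρ.submatrix (Prod.mk k) (Prod.mk k) with hMdef
  have hMpsd : ∀ k, (M k).PosSemidef := fun k => hpsd.submatrix _
  set lamI : I → ℝ := fun k => ((M k).trace).re with hlamdef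
  have hlamtr : ∀ k, ((lamI k : ℝ) : ℂ) = (M k).trace := fun k => psd_trace_real (hMpsd k)
  have hlamnn : ∀ k, 0 ≤ lamI k := by
    intro k
    have := psd_trace_nonneg (hMpsd k)
    rw [Complex.le_def] at this
    exact this.1
  -- candidate B matrices
  set BI : I → Matrix J J ℂ := fun k =>
    if lamI k = 0 then ((Fintype.card J : ℂ)⁻¹) • 1 else ((lamI k : ℂ)⁻¹) • M k with hBIdef
  have hcardJ : (Fintype.card J : ℂ) ≠ 0 := by
    exact_mod_cast Fintype.card_ne_zero (α := J)
  have hBIkey : ∀ k, (lamI k : ℂ) • BI k = M k := by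
    intro k
    by_cases h : lamI k = 0
    · have hM0 : M k = 0 := psd_trace_eq_zero (hMpsd k) (by rw [← hlamtr k, h]; simp)
      simp [hBIdef, h, hM0]
    · have h' : (lamI k : ℂ) ≠ 0 := by exact_mod_cast h
      simp [hBIdef, h, smul_smul, mul_inv_cancel₀ h']
  have hBIpsd : ∀ k, (BI k).PosSemidef := by
    intro k
    by_cases h : lamI k = 0
    · simp only [hBIdef, if_pos h]
      have : ((Fintype.card J : ℂ))⁻¹ = (((Fintype.card J : ℝ)⁻¹ : ℝ) : ℂ) := by push_cast; ring
      rw [this]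
      exact psd_real_smul Matrix.PosSemidef.one (inv_nonneg.mpr (Nat.cast_nonneg _))
    · simp only [hBIdef, if_neg h]
      have : ((lamI k : ℂ))⁻¹ = (((lamI k)⁻¹ : ℝ) : ℂ) := by push_cast; ring
      rw [this]
      exact psd_real_smul (hMpsd k) (inv_nonneg.mpr (hlamnn k))
  have hBItr : ∀ k, (BI k).trace = 1 := by
    intro k
    by_cases h : lamI k = 0
    · simp only [hBIdef, if_pos h]
      rw [Matrix.trace_smul, Matrix.trace_one]
      simp [inv_mul_cancel₀ hcardJ]
    · have h' : (lamI k : ℂ) ≠ 0 := by exact_mod_cast h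
      simp only [hBIdef, if_neg h]
      rw [Matrix.trace_smul, ← hlamtr k]
      simp [inv_mul_cancel₀ h']
  -- trace identity: ρ.trace = ∑ k, (M k).trace
  have htrsum : ∑ k, (M k).trace = 1 := by
    rw [← htr]
    have : ρ.trace = ∑ p : I × J, ρ p p := rfl
    rw [this, Fintype.sum_prod_type]
    rfl
  have hlamsum : ∑ k, lamI k = 1 := by
    have : ((∑ k, lamI k : ℝ) : ℂ) = 1 := by
      push_cast
      rw [Finset.sum_congr rfl fun k _ => hlamtr k]
      exact htrsum
    exact_mod_cast this
  -- key matrix identity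
  have hmain : ρ = ∑ k, (Matrix.single k k (1 : ℂ)) ⊗ₖ M k := by
    ext ⟨l, σ⟩ ⟨m, τ⟩
    rw [Matrix.sum_apply]
    simp only [Matrix.kroneckerMap_apply, Matrix.single, Matrix.of_apply]
    by_cases hlm : l = m
    · subst hlm
      rw [Finset.sum_eq_single l
        (by intro b _ hb; simp [hb]) (by simp)]
      simp [hMdef]
    · rw [Finset.sum_eq_zero]
      · exact hblock l m σ τ hlm
      · intro b _
        rcases eq_or_ne b l with rfl | hbl
        · simp [fun h : b = m => hlm h, hlm]
        · simp [fun h : b = l => hbl h, hbl]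
  refine ⟨Fintype.card I, fun t => lamI (e t),
    fun t => Matrix.single (e t) (e t) 1, fun t => BI (e t),
    fun t => hlamnn _, ?_, fun t => ⟨psd_stdBasisMatrix _, by simp [Matrix.trace_single_eq_same]⟩,
    fun t => ⟨hBIpsd _, hBItr _⟩, ?_⟩
  · rw [Equiv.sum_comp e lamI]
    exact hlamsum
  · rw [Fintype.sum_equiv e _
      (fun k => (lamI k : ℂ) • (Matrix.single k k (1 : ℂ)) ⊗ₖ BI k) (fun t => rfl)]
    rw [hmain]
    refine Finset.sum_congr rfl fun k _ => ?_
    rw [← Matrix.kronecker_smul, hBIkey k]
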